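/- Let z : [0,1]×[0,1] → ℝ be C² with |∂²z/∂x∂y| ≤ M on (0,1)². For i₁ = 2^{j₁}+k₁+1 ≥ 2 and i₂ = 2^{j₂}+k₂+1 ≥ 2, define D_{i₁,i₂} = ∫₀¹∫₀¹ z(x,y) ψ_{i₁}(x) ψ_{i₂}(y) dx dy with ψ the Haar wavelets. Then |D_{i₁,i₂}| ≤ M / (2^{j₁+1} · 2^{j₂+1}). -/

import Mathlib

open MeasureTheory Set intervalIntegral

/-- The Haar wavelet ψ_i on [0,1), indexed by i = 2^j + k + 1 with 0 ≤ k < 2^j. -/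
noncomputable def haarW (j k : ℕ) (x : ℝ) : ℝ :=
  if (k : ℝ) / 2 ^ j ≤ x ∧ x < ((k : ℝ) + 1 / 2) / 2 ^ j then 1
  else if ((k : ℝ) + 1 / 2) / 2 ^ j ≤ x ∧ x < ((k : ℝ) + 1) / 2 ^ j then -1
  else 0

lemma haarW_mul_eq (f : ℝ → ℝ) (j k : ℕ) (x : ℝ) :
    f x * haarW j k x =
      (Ico ((k:ℝ)/2^j) (((k:ℝ)+1/2)/2^j)).indicator f x
        - (Ico (((k:ℝ)+1/2)/2^j) (((k:ℝ)+1)/2^j)).indicator f x := by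
  unfold haarW
  simp only [indicator_apply, mem_Ico]
  split_ifs with h1 h2 <;> try ring
  exact absurd h2.1 (not_le.2 h1.2)

lemma integral_indicator_Ico (f : ℝ → ℝ) {u v : ℝ} (hu : 0 ≤ u) (huv : u ≤ v) (hv : v ≤ 1) :
    ∫ x in (0:ℝ)..1, (Ico u v).indicator f x = ∫ x in u..v, f x := by
  rw [intervalIntegral.integral_of_le (by norm_num : (0:ℝ) ≤ 1),
    intervalIntegral.integral_of_le huv,
    setIntegral_indicator measurableSet_Ico]
  apply setIntegral_congr_set
  have h1 : (Ioc (0:ℝ) 1 ∩ Ico u v : Set ℝ) =ᵐ[volume] (Ioo u v : Set ℝ) := by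
    rw [MeasureTheory.ae_eq_set]
    constructor
    · apply measure_mono_null (t := Icc u v \ Ioo u v)
      · intro x hx
        exact ⟨⟨hx.1.2.1, hx.1.2.2.le⟩, hx.2⟩
      · exact (MeasureTheory.ae_eq_set.1 (Ioo_ae_eq_Icc (α := ℝ) (a := u) (b := v)).symm).1
    · apply measure_mono_null (t := (∅ : Set ℝ))
      · intro x hx
        exact absurd ⟨⟨lt_of_le_of_lt hu hx.1.1, (hx.1.2.le.trans hv)⟩, hx.1.1.le, hx.1.2⟩ hx.2
      · simp
  exact h1.trans Ioo_ae_eq_Ioc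


lemma haar_integral (f : ℝ → ℝ) (hf : Continuous f) (j k : ℕ) (hk : k < 2 ^ j) :
    ∫ x in (0:ℝ)..1, f x * haarW j k x
      = ∫ x in ((k:ℝ)/2^j)..(((k:ℝ)+1/2)/2^j), (f x - f (x + 1/2^(j+1))) := by
  have hj : (0:ℝ) < 2 ^ j := by positivity
  have hk' : (k:ℝ) + 1 ≤ 2 ^ j := by exact_mod_cast Nat.succ_le_of_lt hk
  have ha : (0:ℝ) ≤ (k:ℝ)/2^j := by positivity
  have hab : (k:ℝ)/2^j ≤ ((k:ℝ)+1/2)/2^j := (div_le_div_iff_of_pos_right hj).2 (by linarith)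
  have hbc : ((k:ℝ)+1/2)/2^j ≤ ((k:ℝ)+1)/2^j := (div_le_div_iff_of_pos_right hj).2 (by linarith)
  have hc1 : ((k:ℝ)+1)/2^j ≤ 1 := (div_le_one hj).2 hk'
  have hb1 : ((k:ℝ)+1/2)/2^j ≤ 1 := hbc.trans hc1
  have hstep : ((k:ℝ)+1/2)/2^j = (k:ℝ)/2^j + 1/2^(j+1) := by
    rw [pow_succ]; field_simp
  have hstep2 : ((k:ℝ)+1)/2^j = ((k:ℝ)+1/2)/2^j + 1/2^(j+1) := by
    rw [pow_succ]; field_simp; ring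
  have h1 : ∫ x in (0:ℝ)..1, f x * haarW j k x
      = (∫ x in (0:ℝ)..1, (Ico ((k:ℝ)/2^j) (((k:ℝ)+1/2)/2^j)).indicator f x)
        - ∫ x in (0:ℝ)..1, (Ico (((k:ℝ)+1/2)/2^j) (((k:ℝ)+1)/2^j)).indicator f x := by
    rw [← intervalIntegral.integral_sub]
    · exact intervalIntegral.integral_congr fun x _ => haarW_mul_eq f j k x
    · rw [intervalIntegrable_iff]
      exact ((hf.intervalIntegrable 0 1).def' ).indicator measurableSet_Ico
    · rw [intervalIntegrable_iff]
      exact ((hf.intervalIntegrable 0 1).def' ).indicator measurableSet_Ico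
  rw [h1, integral_indicator_Ico f ha hab hb1,
    integral_indicator_Ico f (ha.trans hab) hbc hc1]
  have h2 : ∫ x in (((k:ℝ)+1/2)/2^j)..(((k:ℝ)+1)/2^j), f x
      = ∫ x in ((k:ℝ)/2^j)..(((k:ℝ)+1/2)/2^j), f (x + 1/2^(j+1)) := by
    rw [intervalIntegral.integral_comp_add_right f (1/2^(j+1)), ← hstep, ← hstep2]
  rw [h2]
  exact (intervalIntegral.integral_sub (hf.intervalIntegrable _ _)
    ((hf.comp (continuous_id.add continuous_const)).intervalIntegrable _ _)).symm


noncomputable def pd2 (z : ℝ → ℝ → ℝ) : ℝ × ℝ → ℝ :=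
  fun p => fderiv ℝ (fun q : ℝ × ℝ => z q.1 q.2) p (0, 1)

noncomputable def pd12 (z : ℝ → ℝ → ℝ) : ℝ × ℝ → ℝ :=
  fun p => fderiv ℝ (pd2 z) p (1, 0)

lemma hasDerivAt_snd {z : ℝ → ℝ → ℝ} (hz : ContDiff ℝ 2 fun p : ℝ × ℝ => z p.1 p.2)
    (x y : ℝ) : HasDerivAt (fun y => z x y) (pd2 z (x, y)) y := by
  have h1 : HasFDerivAt (fun p : ℝ × ℝ => z p.1 p.2)
      (fderiv ℝ (fun p : ℝ × ℝ => z p.1 p.2) (x, y)) (x, y) :=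
    ((hz.differentiable (by norm_num)) (x, y)).hasFDerivAt
  have h2 : HasDerivAt (fun t : ℝ => ((x, t) : ℝ × ℝ)) ((0 : ℝ), (1 : ℝ)) y :=
    (hasDerivAt_const y x).prodMk (hasDerivAt_id y)
  exact h1.comp_hasDerivAt y h2

lemma contDiff_pd2 {z : ℝ → ℝ → ℝ} (hz : ContDiff ℝ 2 fun p : ℝ × ℝ => z p.1 p.2) :
    ContDiff ℝ 1 (pd2 z) :=
  (hz.fderiv_right (by norm_num)).clm_apply contDiff_const

lemma hasDerivAt_fst_pd2 {z : ℝ → ℝ → ℝ} (hz : ContDiff ℝ 2 fun p : ℝ × ℝ => z p.1 p.2)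
    (x y : ℝ) : HasDerivAt (fun x => pd2 z (x, y)) (pd12 z (x, y)) x := by
  have h1 : HasFDerivAt (pd2 z) (fderiv ℝ (pd2 z) (x, y)) (x, y) :=
    (((contDiff_pd2 hz).differentiable one_ne_zero) (x, y)).hasFDerivAt
  have h2 : HasDerivAt (fun t : ℝ => ((t, y) : ℝ × ℝ)) ((1 : ℝ), (0 : ℝ)) x :=
    (hasDerivAt_id x).prodMk (hasDerivAt_const x y)
  exact h1.comp_hasDerivAt x h2

lemma continuous_pd12 {z : ℝ → ℝ → ℝ} (hz : ContDiff ℝ 2 fun p : ℝ × ℝ => z p.1 p.2) :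
    Continuous (pd12 z) :=
  (ContinuousLinearMap.apply ℝ ℝ (((1:ℝ), (0:ℝ)) : ℝ × ℝ)).continuous.comp
    ((contDiff_pd2 hz).continuous_fderiv one_ne_zero)

lemma deriv_deriv_eq {z : ℝ → ℝ → ℝ} (hz : ContDiff ℝ 2 fun p : ℝ × ℝ => z p.1 p.2)
    (x y : ℝ) :
    deriv (fun x => deriv (fun y => z x y) y) x = pd12 z (x, y) := by
  have h1 : (fun x => deriv (fun y => z x y) y) = fun x => pd2 z (x, y) :=
    funext fun x => (hasDerivAt_snd hz x y).deriv
  rw [h1]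
  exact (hasDerivAt_fst_pd2 hz x y).deriv

theorem haar_coefficient_bound_two_indices
    (z : ℝ → ℝ → ℝ) (M : ℝ) (j₁ k₁ j₂ k₂ : ℕ)
    (hk₁ : k₁ < 2 ^ j₁) (hk₂ : k₂ < 2 ^ j₂)
    (hz : ContDiff ℝ 2 (fun p : ℝ × ℝ => z p.1 p.2))
    (hM : ∀ x ∈ Set.Ioo (0:ℝ) 1, ∀ y ∈ Set.Ioo (0:ℝ) 1,
      |deriv (fun x => deriv (fun y => z x y) y) x| ≤ M) :
    |∫ x in (0:ℝ)..1, ∫ y in (0:ℝ)..1, z x y * haarW j₁ k₁ x * haarW j₂ k₂ y|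
      ≤ M / (2 ^ (j₁ + 1) * 2 ^ (j₂ + 1)) := by
  have hFc : Continuous fun p : ℝ × ℝ => z p.1 p.2 := hz.continuous
  have hpd2c : Continuous (pd2 z) := (contDiff_pd2 hz).continuous
  have hpd12c : Continuous (pd12 z) := continuous_pd12 hz
  set a1 : ℝ := (k₁:ℝ)/2^j₁ with ha1def
  set b1 : ℝ := ((k₁:ℝ)+1/2)/2^j₁ with hb1def
  set e1 : ℝ := 1/2^(j₁+1) with he1def
  set a2 : ℝ := (k₂:ℝ)/2^j₂ with ha2def
  set b2 : ℝ := ((k₂:ℝ)+1/2)/2^j₂ with hb2def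
  set e2 : ℝ := 1/2^(j₂+1) with he2def
  have hj1 : (0:ℝ) < 2 ^ j₁ := by positivity
  have hj2 : (0:ℝ) < 2 ^ j₂ := by positivity
  have hk1' : (k₁:ℝ) + 1 ≤ 2 ^ j₁ := by exact_mod_cast Nat.succ_le_of_lt hk₁
  have hk2' : (k₂:ℝ) + 1 ≤ 2 ^ j₂ := by exact_mod_cast Nat.succ_le_of_lt hk₂
  have ha1 : (0:ℝ) ≤ a1 := by positivity
  have ha2 : (0:ℝ) ≤ a2 := by positivity
  have he1pos : (0:ℝ) < e1 := by rw [he1def]; positivity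
  have he2pos : (0:ℝ) < e2 := by rw [he2def]; positivity
  have hb1e : b1 = a1 + e1 := by
    rw [hb1def, ha1def, he1def, pow_succ]; field_simp
  have hb2e : b2 = a2 + e2 := by
    rw [hb2def, ha2def, he2def, pow_succ]; field_simp
  have hc1 : b1 + e1 ≤ 1 := by
    rw [hb1def, he1def, pow_succ]
    rw [div_add_div _ _ (ne_of_gt hj1) (by positivity : (2:ℝ)^j₁ * 2 ≠ 0)]
    rw [div_le_one (by positivity)]
    nlinarith
  have hc2 : b2 + e2 ≤ 1 := by
    rw [hb2def, he2def, pow_succ]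
    rw [div_add_div _ _ (ne_of_gt hj2) (by positivity : (2:ℝ)^j₂ * 2 ≠ 0)]
    rw [div_le_one (by positivity)]
    nlinarith
  have hab1 : a1 ≤ b1 := by rw [hb1e]; linarith
  have hab2 : a2 ≤ b2 := by rw [hb2e]; linarith
  -- nonnegativity of M and the extended bound
  have hMnonneg : 0 ≤ M :=
    le_trans (abs_nonneg _) (hM (1/2) (by norm_num) (1/2) (by norm_num))
  have hM' : ∀ u v : ℝ, u ∈ Icc (0:ℝ) 1 → v ∈ Icc (0:ℝ) 1 → |pd12 z (u, v)| ≤ M := by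
    have hsub : (Ioo (0:ℝ) 1 ×ˢ Ioo (0:ℝ) 1 : Set (ℝ×ℝ)) ⊆ {q : ℝ × ℝ | |pd12 z q| ≤ M} := by
      rintro ⟨u, v⟩ ⟨hu, hv⟩
      have := hM u hu v hv
      rwa [deriv_deriv_eq hz u v] at this
    have hclosed : IsClosed {q : ℝ × ℝ | |pd12 z q| ≤ M} :=
      isClosed_le hpd12c.abs continuous_const
    intro u v hu hv
    have hmem : ((u, v) : ℝ × ℝ) ∈ closure (Ioo (0:ℝ) 1 ×ˢ Ioo (0:ℝ) 1) := by
      rw [closure_prod_eq, closure_Ioo (by norm_num : (0:ℝ) ≠ 1)]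
      exact ⟨hu, hv⟩
    exact closure_minimal hsub hclosed hmem
  -- continuity in single variables
  have hcy : ∀ x : ℝ, Continuous fun y => z x y :=
    fun x => hFc.comp (Continuous.prodMk_right x)
  -- Step 1: inner integral
  have hinner : ∀ x : ℝ, (∫ y in (0:ℝ)..1, z x y * haarW j₁ k₁ x * haarW j₂ k₂ y)
      = (∫ y in a2..b2, (z x y - z x (y + e2))) * haarW j₁ k₁ x := by
    intro x
    have hc : Continuous fun y => z x y * haarW j₁ k₁ x := (hcy x).mul continuous_const
    rw [haar_integral (fun y => z x y * haarW j₁ k₁ x) hc j₂ k₂ hk₂,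
      ← intervalIntegral.integral_mul_const]
    exact intervalIntegral.integral_congr fun y _ => by ring
  simp only [hinner]
  -- Step 2: outer integral
  have hgc : Continuous fun x => ∫ y in a2..b2, (z x y - z x (y + e2)) := by
    apply intervalIntegral.continuous_parametric_intervalIntegral_of_continuous'
    show Continuous fun p : ℝ × ℝ => z p.1 p.2 - z p.1 (p.2 + e2)
    exact hFc.sub (hFc.comp (continuous_fst.prodMk (continuous_snd.add continuous_const)))
  rw [haar_integral _ hgc j₁ k₁ hk₁]
  -- Step 3: rewrite as double integral of a second difference
  have hsplit : ∀ x : ℝ,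
      ((∫ y in a2..b2, (z x y - z x (y + e2)))
        - ∫ y in a2..b2, (z (x+e1) y - z (x+e1) (y + e2)))
      = ∫ y in a2..b2, ((z x y - z x (y + e2)) - (z (x+e1) y - z (x+e1) (y + e2))) := by
    intro x
    refine (intervalIntegral.integral_sub ?_ ?_).symm
    · exact ((hcy x).sub ((hcy x).comp (continuous_id.add continuous_const))).intervalIntegrable _ _
    · exact ((hcy (x+e1)).sub ((hcy (x+e1)).comp
        (continuous_id.add continuous_const))).intervalIntegrable _ _
  -- FTC identities
  have hφ : ∀ x v : ℝ, pd2 z (x+e1, v) - pd2 z (x, v) = ∫ u in x..(x+e1), pd12 z (u, v) := by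
    intro x v
    rw [intervalIntegral.integral_eq_sub_of_hasDerivAt
      (f := fun u => pd2 z (u, v)) (f' := fun u => pd12 z (u, v))
      (fun t _ => hasDerivAt_fst_pd2 hz t v)
      ((hpd12c.comp (continuous_id.prodMk continuous_const)).intervalIntegrable _ _)]
  have hΔ : ∀ x y : ℝ, ((z x y - z x (y + e2)) - (z (x+e1) y - z (x+e1) (y + e2)))
      = ∫ v in y..(y+e2), (pd2 z (x+e1, v) - pd2 z (x, v)) := by
    intro x y
    rw [intervalIntegral.integral_eq_sub_of_hasDerivAt
      (f := fun v => z (x+e1) v - z x v)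
      (f' := fun v => pd2 z (x+e1, v) - pd2 z (x, v))
      (fun t _ => (hasDerivAt_snd hz (x+e1) t).sub (hasDerivAt_snd hz x t))
      (((hpd2c.comp (continuous_const.prodMk continuous_id)).sub
        (hpd2c.comp (continuous_const.prodMk continuous_id))).intervalIntegrable _ _)]
    ring
  -- Bound chain
  have boundφ : ∀ x : ℝ, x ∈ Icc a1 b1 → ∀ v : ℝ, v ∈ Icc (0:ℝ) 1 →
      |pd2 z (x+e1, v) - pd2 z (x, v)| ≤ M * e1 := by
    intro x hx v hv
    rw [hφ x v, ← Real.norm_eq_abs]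
    have hb := intervalIntegral.norm_integral_le_of_norm_le_const (C := M)
      (f := fun u => pd12 z (u, v)) (a := x) (b := x + e1) ?_
    · calc ‖∫ u in x..(x+e1), pd12 z (u, v)‖ ≤ M * |x + e1 - x| := hb
        _ = M * e1 := by rw [show x + e1 - x = e1 by ring, abs_of_pos he1pos]
    · intro u hu
      rw [Set.uIoc_of_le (by linarith : x ≤ x + e1)] at hu
      rw [Real.norm_eq_abs]
      exact hM' u v ⟨by linarith [hx.1, hu.1], by linarith [hx.2, hu.2, hc1]⟩ hv
  have boundΔ : ∀ x : ℝ, x ∈ Icc a1 b1 → ∀ y : ℝ, y ∈ Icc a2 b2 →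
      |(z x y - z x (y + e2)) - (z (x+e1) y - z (x+e1) (y + e2))| ≤ M * e1 * e2 := by
    intro x hx y hy
    rw [hΔ x y, ← Real.norm_eq_abs]
    have hb := intervalIntegral.norm_integral_le_of_norm_le_const (C := M * e1)
      (f := fun v => pd2 z (x+e1, v) - pd2 z (x, v)) (a := y) (b := y + e2) ?_
    · calc ‖∫ v in y..(y+e2), (pd2 z (x+e1, v) - pd2 z (x, v))‖
          ≤ M * e1 * |y + e2 - y| := hb
        _ = M * e1 * e2 := by rw [show y + e2 - y = e2 by ring, abs_of_pos he2pos]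
    · intro v hv
      rw [Set.uIoc_of_le (by linarith : y ≤ y + e2)] at hv
      rw [Real.norm_eq_abs]
      exact boundφ x hx v ⟨by linarith [hy.1, hv.1], by linarith [hy.2, hv.2, hc2]⟩
  have boundInner : ∀ x : ℝ, x ∈ Icc a1 b1 →
      |∫ y in a2..b2, ((z x y - z x (y + e2)) - (z (x+e1) y - z (x+e1) (y + e2)))|
        ≤ M * e1 * e2 * e2 := by
    intro x hx
    rw [← Real.norm_eq_abs]
    have hb := intervalIntegral.norm_integral_le_of_norm_le_const (C := M * e1 * e2)
      (f := fun y => (z x y - z x (y + e2)) - (z (x+e1) y - z (x+e1) (y + e2)))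
      (a := a2) (b := b2) ?_
    · calc ‖∫ y in a2..b2, ((z x y - z x (y + e2)) - (z (x+e1) y - z (x+e1) (y + e2)))‖
          ≤ M * e1 * e2 * |b2 - a2| := hb
        _ = M * e1 * e2 * e2 := by rw [show b2 - a2 = e2 by rw [hb2e]; ring, abs_of_pos he2pos]
    · intro y hy
      rw [Set.uIoc_of_le hab2] at hy
      rw [Real.norm_eq_abs]
      exact boundΔ x hx y ⟨hy.1.le, hy.2⟩
  -- final bound
  have hfinal : |∫ x in a1..b1,
      ((∫ y in a2..b2, (z x y - z x (y + e2)))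
        - ∫ y in a2..b2, (z (x+e1) y - z (x+e1) (y + e2)))|
      ≤ M * e1 * e2 * e2 * e1 := by
    rw [← Real.norm_eq_abs]
    have hb := intervalIntegral.norm_integral_le_of_norm_le_const (C := M * e1 * e2 * e2)
      (f := fun x => (∫ y in a2..b2, (z x y - z x (y + e2)))
        - ∫ y in a2..b2, (z (x+e1) y - z (x+e1) (y + e2)))
      (a := a1) (b := b1) ?_
    · calc _ ≤ M * e1 * e2 * e2 * |b1 - a1| := hb
        _ = M * e1 * e2 * e2 * e1 := by rw [show b1 - a1 = e1 by rw [hb1e]; ring, abs_of_pos he1pos]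
    · intro x hx
      rw [Set.uIoc_of_le hab1] at hx
      beta_reduce
      rw [Real.norm_eq_abs, hsplit x]
      exact boundInner x ⟨hx.1.le, hx.2⟩
  -- put together
  have hgoal : M / (2 ^ (j₁ + 1) * 2 ^ (j₂ + 1)) = M * e1 * e2 := by
    rw [he1def, he2def]; field_simp
  rw [hgoal]
  have he1le : e1 ≤ 1 := by
    rw [he1def, div_le_one (by positivity)]
    exact one_le_pow₀ (by norm_num : (1:ℝ) ≤ 2)
  have he2le : e2 ≤ 1 := by
    rw [he2def, div_le_one (by positivity)]
    exact one_le_pow₀ (by norm_num : (1:ℝ) ≤ 2)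
  have hlast : M * e1 * e2 * e2 * e1 ≤ M * e1 * e2 := by
    have h12 : e2 * e1 ≤ 1 := by nlinarith
    calc M * e1 * e2 * e2 * e1 = M * e1 * e2 * (e2 * e1) := by ring
      _ ≤ M * e1 * e2 * 1 := mul_le_mul_of_nonneg_left h12
          (mul_nonneg (mul_nonneg hMnonneg he1pos.le) he2pos.le)
      _ = M * e1 * e2 := by ring
  exact le_trans hfinal hlast
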